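/- For a discrete community C with positive volume in a finite graph, a node i satisfies ∇φ₀(𝟙_C)_i < 0 if and only if 2a_{iC}/w_i > a_{CC}/a_{CV}, i.e., if and only if 2a_{iC}/w_i > 1 − φ(C). Thus in the EM algorithm with σ = 0, a node joins the community exactly when twice its fraction of edges into the community exceeds one minus the community's conductance. -/
import Mathlib


open Finset

/-- degree of node `i`. -/
noncomputable def w {n : ℕ} (A : Matrix (Fin n) (Fin n) ℝ) (i : Fin n) : ℝ := ∑ j, A i j

/-- edge weight from a node to a set. -/
noncomputable def aN {n : ℕ} (A : Matrix (Fin n) (Fin n) ℝ) (i : Fin n) (C : Finset (Fin n)) : ℝ :=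
  ∑ j ∈ C, A i j

/-- total edge weight inside a set. -/
noncomputable def aCC {n : ℕ} (A : Matrix (Fin n) (Fin n) ℝ) (C : Finset (Fin n)) : ℝ :=
  ∑ i ∈ C, ∑ j ∈ C, A i j

/-- volume of a set of nodes. -/
noncomputable def vol {n : ℕ} (A : Matrix (Fin n) (Fin n) ℝ) (C : Finset (Fin n)) : ℝ :=
  ∑ j ∈ C, w A j

/-- conductance of a set. -/
noncomputable def phi {n : ℕ} (A : Matrix (Fin n) (Fin n) ℝ) (C : Finset (Fin n)) : ℝ :=
  1 - aCC A C / vol A C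

/-- the gradient of (0-)conductance at the indicator of C is negative
at node i iff 2a_{iC}/w_i > a_{CC}/a_{CV}, equivalently iff 2a_{iC}/w_i > 1 − φ(C). -/
theorem stmt_15 {n : ℕ} (A : Matrix (Fin n) (Fin n) ℝ)
    (hsym : ∀ i j, A i j = A j i) (hnonneg : ∀ i j, 0 ≤ A i j)
    (hw : ∀ i, 0 < w A i)
    (C : Finset (Fin n)) (hvol : 0 < vol A C) (i : Fin n) :
    ((w A i * aCC A C / (vol A C) ^ 2 - 2 * aN A i C / vol A C < 0) ↔
      2 * aN A i C / w A i > aCC A C / vol A C) ∧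
    ((w A i * aCC A C / (vol A C) ^ 2 - 2 * aN A i C / vol A C < 0) ↔
      2 * aN A i C / w A i > 1 - phi A C) := by
  have hwi := hw i
  have hv2 : (0:ℝ) < (vol A C)^2 := by positivity
  have key : (w A i * aCC A C / (vol A C) ^ 2 - 2 * aN A i C / vol A C < 0) ↔
      2 * aN A i C / w A i > aCC A C / vol A C := by
    rw [sub_neg, div_lt_div_iff₀ hv2 hvol, gt_iff_lt, div_lt_div_iff₀ hvol hwi]
    constructor <;> intro h <;> nlinarith
  refine ⟨key, key.trans ?_⟩
  unfold phi
  ring_nf
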